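/- The lines contained in the family of hyperboloids x² + y² = t(z² + 1), t > 0, together with the z-axis, partition ℝ³ into pairwise disjoint lines, and any two distinct lines in this family are skew (non-parallel and non-intersecting) — in particular ℝ³ can be partitioned into pairwise skew lines. -/

import Mathlib

/-- The z-axis in ℝ³. -/
def zAxis : Set (ℝ × ℝ × ℝ) := {p | p.1 = 0 ∧ p.2.1 = 0}

/-- A ruling line of the hyperboloid `x² + y² = t (z² + 1)` through
`(√t cos θ, √t sin θ, 0)`. -/
def ruling (t θ : ℝ) : Set (ℝ × ℝ × ℝ) :=
  {p | ∃ s : ℝ, p = (Real.sqrt t * Real.cos θ - s * (Real.sqrt t * Real.sin θ),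
                     Real.sqrt t * Real.sin θ + s * (Real.sqrt t * Real.cos θ), s)}

/-- The family consisting of the z-axis together with the ruling lines of the
hyperboloids `x² + y² = t (z² + 1)`, `t > 0`. -/
def lineFamily : Set (Set (ℝ × ℝ × ℝ)) :=
  {zAxis} ∪ {l | ∃ t θ : ℝ, 0 < t ∧ l = ruling t θ}

lemma ruling_eq_of {t θ t' θ' : ℝ}
    (hc : Real.sqrt t * Real.cos θ = Real.sqrt t' * Real.cos θ')
    (hs : Real.sqrt t * Real.sin θ = Real.sqrt t' * Real.sin θ') :
    ruling t θ = ruling t' θ' := by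
  unfold ruling; rw [hc, hs]

lemma mem_ruling {t θ : ℝ} {p : ℝ × ℝ × ℝ} :
    p ∈ ruling t θ ↔
      p.1 = Real.sqrt t * Real.cos θ - p.2.2 * (Real.sqrt t * Real.sin θ) ∧
      p.2.1 = Real.sqrt t * Real.sin θ + p.2.2 * (Real.sqrt t * Real.cos θ) := by
  obtain ⟨x, y, z⟩ := p
  constructor
  · rintro ⟨s, h⟩
    simp only [Prod.mk.injEq] at h
    obtain ⟨h1, h2, h3⟩ := h
    subst h3
    exact ⟨h1, h2⟩
  · rintro ⟨h1, h2⟩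
    exact ⟨z, by simp only [Prod.mk.injEq]; exact ⟨h1, h2, trivial⟩⟩

lemma ruling_normsq {t θ : ℝ} (ht : 0 ≤ t) {p : ℝ × ℝ × ℝ} (hp : p ∈ ruling t θ) :
    p.1 ^ 2 + p.2.1 ^ 2 = t * (p.2.2 ^ 2 + 1) := by
  obtain ⟨s, rfl⟩ := hp
  have h1 : Real.sqrt t ^ 2 = t := Real.sq_sqrt ht
  have h2 := Real.sin_sq_add_cos_sq θ
  dsimp only
  linear_combination (Real.sqrt t ^ 2) * (s ^ 2 + 1) * h2 + (s ^ 2 + 1) * h1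

lemma coeff_unique {t θ t' θ' : ℝ} {p : ℝ × ℝ × ℝ}
    (hp : p ∈ ruling t θ) (hp' : p ∈ ruling t' θ') :
    Real.sqrt t * Real.cos θ = Real.sqrt t' * Real.cos θ' ∧
    Real.sqrt t * Real.sin θ = Real.sqrt t' * Real.sin θ' := by
  obtain ⟨x, y, z⟩ := p
  rw [mem_ruling] at hp hp'
  dsimp only at hp hp'
  obtain ⟨e1, e2⟩ := hp
  obtain ⟨e1', e2'⟩ := hp'
  have k1 : (Real.sqrt t * Real.cos θ - Real.sqrt t' * Real.cos θ') * (1 + z ^ 2) = 0 := by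
    linear_combination (e1' - e1) - z * (e2 - e2')
  have hz : (0:ℝ) < 1 + z ^ 2 := by positivity
  have hc : Real.sqrt t * Real.cos θ = Real.sqrt t' * Real.cos θ' := by
    rcases mul_eq_zero.mp k1 with h | h
    · linarith
    · exfalso; linarith
  refine ⟨hc, ?_⟩
  linear_combination (e2' - e2) - z * hc

lemma exists_theta {c d t : ℝ} (ht : 0 < t) (hcd : c ^ 2 + d ^ 2 = t) :
    ∃ θ : ℝ, Real.sqrt t * Real.cos θ = c ∧ Real.sqrt t * Real.sin θ = d := by
  set w : ℂ := ⟨c, d⟩ with hw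
  have habs : ‖w‖ = Real.sqrt t := by
    rw [Complex.norm_def, Complex.normSq_apply]
    congr 1
    simpa [hw] using by nlinarith [hcd]
  have hst : Real.sqrt t ≠ 0 := ne_of_gt (Real.sqrt_pos.mpr ht)
  have hw0 : w ≠ 0 := by
    intro h
    rw [h] at habs
    simp at habs
    exact hst habs.symm
  refine ⟨Complex.arg w, ?_, ?_⟩
  · rw [Complex.cos_arg hw0, habs]
    field_simp [hw]
    rfl
  · rw [Complex.sin_arg, habs]
    field_simp [hw]
    rfl

lemma exists_mem_ruling (x y z : ℝ) (h : x ^ 2 + y ^ 2 ≠ 0) :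
    ∃ t θ : ℝ, 0 < t ∧ (x, y, z) ∈ ruling t θ := by
  have hz : (0:ℝ) < 1 + z ^ 2 := by positivity
  have hN : 0 < x ^ 2 + y ^ 2 := lt_of_le_of_ne (by positivity) (Ne.symm h)
  have ht : 0 < (x ^ 2 + y ^ 2) / (1 + z ^ 2) := div_pos hN hz
  have hcd : ((x + z * y) / (1 + z ^ 2)) ^ 2 + ((y - z * x) / (1 + z ^ 2)) ^ 2
      = (x ^ 2 + y ^ 2) / (1 + z ^ 2) := by
    field_simp
    ring
  obtain ⟨θ, hc, hd⟩ := exists_theta ht hcd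
  refine ⟨(x ^ 2 + y ^ 2) / (1 + z ^ 2), θ, ht, ?_⟩
  rw [mem_ruling]
  dsimp only
  rw [hc, hd]
  constructor
  · field_simp
    ring
  · field_simp
    ring

lemma not_mem_ruling_of_zAxis {t θ : ℝ} (ht : 0 < t) {p : ℝ × ℝ × ℝ}
    (hp : p ∈ zAxis) : p ∉ ruling t θ := by
  intro hr
  have := ruling_normsq ht.le hr
  obtain ⟨h1, h2⟩ := hp
  rw [h1, h2] at this
  nlinarith [sq_nonneg p.2.2]

lemma part1 (p : ℝ × ℝ × ℝ) : ∃! l : Set (ℝ × ℝ × ℝ), l ∈ lineFamily ∧ p ∈ l := by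
  obtain ⟨x, y, z⟩ := p
  by_cases h : x = 0 ∧ y = 0
  · refine ⟨zAxis, ⟨Or.inl rfl, h⟩, ?_⟩
    rintro l ⟨hl, hpl⟩
    rcases hl with hl | ⟨t, θ, ht, rfl⟩
    · exact hl
    · exact absurd hpl (not_mem_ruling_of_zAxis ht h)
  · have hN : x ^ 2 + y ^ 2 ≠ 0 := by
      intro h0
      exact h ⟨by nlinarith [sq_nonneg x, sq_nonneg y], by nlinarith [sq_nonneg x, sq_nonneg y]⟩
    obtain ⟨t, θ, ht, hmem⟩ := exists_mem_ruling x y z hN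
    refine ⟨ruling t θ, ⟨Or.inr ⟨t, θ, ht, rfl⟩, hmem⟩, ?_⟩
    rintro l ⟨hl, hpl⟩
    rcases hl with hl | ⟨t', θ', ht', rfl⟩
    · exfalso
      rw [Set.mem_singleton_iff] at hl
      subst hl
      obtain ⟨h1, h2⟩ := hpl
      dsimp only at h1 h2
      exact hN (by rw [h1, h2]; ring)
    · obtain ⟨hc, hd⟩ := coeff_unique hpl hmem
      exact ruling_eq_of hc hd

lemma mem_ruling_zero (t θ : ℝ) :
    (Real.sqrt t * Real.cos θ, Real.sqrt t * Real.sin θ, 0) ∈ ruling t θ :=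
  ⟨0, by norm_num⟩

lemma mem_ruling_one (t θ : ℝ) :
    (Real.sqrt t * Real.cos θ - Real.sqrt t * Real.sin θ,
     Real.sqrt t * Real.sin θ + Real.sqrt t * Real.cos θ, 1) ∈ ruling t θ :=
  ⟨1, by norm_num⟩

lemma coeff_sq (t θ : ℝ) (ht : 0 ≤ t) :
    (Real.sqrt t * Real.cos θ) ^ 2 + (Real.sqrt t * Real.sin θ) ^ 2 = t := by
  have h1 : Real.sqrt t ^ 2 = t := Real.sq_sqrt ht
  have h2 := Real.sin_sq_add_cos_sq θ
  nlinarith [h1, h2]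

-- a translate of zAxis is never a ruling
lemma ruling_ne_translate_zAxis {t θ : ℝ} (ht : 0 < t) (v : ℝ × ℝ × ℝ) :
    ruling t θ ≠ (fun p => p + v) '' zAxis := by
  obtain ⟨v1, v2, v3⟩ := v
  intro hv
  set c := Real.sqrt t * Real.cos θ with hcdef
  set d := Real.sqrt t * Real.sin θ with hddef
  have h0 := mem_ruling_zero t θ
  have h1 := mem_ruling_one t θ
  rw [hv] at h0 h1
  obtain ⟨⟨q1, q2, q3⟩, ⟨hq1, hq2⟩, heq⟩ := h0
  obtain ⟨⟨r1, r2, r3⟩, ⟨hr1, hr2⟩, her⟩ := h1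
  dsimp only at hq1 hq2 hr1 hr2
  simp only [Prod.mk_add_mk, Prod.mk.injEq] at heq her
  subst hq1; subst hq2; subst hr1; subst hr2
  have hd0 : d = 0 := by linarith [heq.1, her.1]
  have hc0 : c = 0 := by linarith [heq.2.1, her.2.1]
  have := coeff_sq t θ ht.le
  rw [← hcdef, ← hddef, hc0, hd0] at this
  nlinarith

-- a translate of a ruling is never zAxis
lemma zAxis_ne_translate_ruling {t θ : ℝ} (ht : 0 < t) (v : ℝ × ℝ × ℝ) :
    zAxis ≠ (fun p => p + v) '' ruling t θ := by
  obtain ⟨v1, v2, v3⟩ := v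
  intro hv
  set c := Real.sqrt t * Real.cos θ with hcdef
  set d := Real.sqrt t * Real.sin θ with hddef
  have h0 : ((0:ℝ), (0:ℝ), (0:ℝ)) ∈ zAxis := ⟨rfl, rfl⟩
  have h1 : ((0:ℝ), (0:ℝ), (1:ℝ)) ∈ zAxis := ⟨rfl, rfl⟩
  rw [hv] at h0 h1
  obtain ⟨q, ⟨s, rfl⟩, heq⟩ := h0
  obtain ⟨r, ⟨s', rfl⟩, her⟩ := h1
  simp only [Prod.mk_add_mk, Prod.mk.injEq] at heq her
  obtain ⟨e1, e2, e3⟩ := heq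
  obtain ⟨f1, f2, f3⟩ := her
  rw [← hcdef, ← hddef] at e1 e2 f1 f2
  have hss : s' = s + 1 := by linarith
  have hd0 : d = 0 := by linear_combination (e1 - f1) - d * hss
  have hc0 : c = 0 := by linear_combination (f2 - e2) - c * hss
  have := coeff_sq t θ ht.le
  rw [← hcdef, ← hddef, hc0, hd0] at this
  nlinarith

-- a translate of a ruling, if a ruling, is the same ruling
lemma ruling_eq_of_translate {t θ t' θ' : ℝ} (v : ℝ × ℝ × ℝ)
    (hv : ruling t' θ' = (fun p => p + v) '' ruling t θ) :
    ruling t θ = ruling t' θ' := by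
  obtain ⟨v1, v2, v3⟩ := v
  have h0 := Set.mem_image_of_mem (fun p => p + (v1, v2, v3)) (mem_ruling_zero t θ)
  have h1 := Set.mem_image_of_mem (fun p => p + (v1, v2, v3)) (mem_ruling_one t θ)
  rw [← hv] at h0 h1
  simp only [Prod.mk_add_mk] at h0 h1
  rw [mem_ruling] at h0 h1
  dsimp only at h0 h1
  obtain ⟨a1, a2⟩ := h0
  obtain ⟨b1, b2⟩ := h1
  have hc : Real.sqrt t * Real.cos θ = Real.sqrt t' * Real.cos θ' := by
    nlinarith [a1, a2, b1, b2]
  have hd : Real.sqrt t * Real.sin θ = Real.sqrt t' * Real.sin θ' := by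
    nlinarith [a1, a2, b1, b2]
  exact ruling_eq_of hc hd

lemma disjoint_zAxis_ruling {t θ : ℝ} (ht : 0 < t) : Disjoint zAxis (ruling t θ) :=
  Set.disjoint_left.mpr fun _ hp => not_mem_ruling_of_zAxis ht hp

lemma part2 : ∀ l₁ ∈ lineFamily, ∀ l₂ ∈ lineFamily, l₁ ≠ l₂ →
    Disjoint l₁ l₂ ∧ ¬ ∃ v : ℝ × ℝ × ℝ, l₂ = (fun p => p + v) '' l₁ := by
  rintro l₁ h₁ l₂ h₂ hne
  rcases h₁ with h₁ | ⟨t, θ, ht, rfl⟩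
  · rw [Set.mem_singleton_iff] at h₁; subst h₁
    rcases h₂ with h₂ | ⟨t', θ', ht', rfl⟩
    · rw [Set.mem_singleton_iff] at h₂; exact absurd h₂.symm hne
    · exact ⟨disjoint_zAxis_ruling ht', fun ⟨v, hv⟩ => ruling_ne_translate_zAxis ht' v hv⟩
  rcases h₂ with h₂ | ⟨t', θ', ht', rfl⟩
  · rw [Set.mem_singleton_iff] at h₂; subst h₂
    exact ⟨(disjoint_zAxis_ruling ht).symm, fun ⟨v, hv⟩ => zAxis_ne_translate_ruling ht v hv⟩
  · constructor
    · rw [Set.disjoint_left]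
      intro p hp hp'
      obtain ⟨hc, hd⟩ := coeff_unique hp hp'
      exact hne (ruling_eq_of hc hd)
    · rintro ⟨v, hv⟩
      exact hne (ruling_eq_of_translate v hv)

/-- The z-axis together with the ruling lines of the hyperboloids
`x² + y² = t(z² + 1)`, `t > 0`, partition ℝ³ into pairwise disjoint lines, any two
distinct ones of which are skew (disjoint and not translates of one another):
in particular ℝ³ can be partitioned into pairwise skew lines. -/
theorem stmt_16 :
    (∀ p : ℝ × ℝ × ℝ, ∃! l : Set (ℝ × ℝ × ℝ), l ∈ lineFamily ∧ p ∈ l) ∧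
    (∀ l₁ ∈ lineFamily, ∀ l₂ ∈ lineFamily, l₁ ≠ l₂ →
      Disjoint l₁ l₂ ∧ ¬ ∃ v : ℝ × ℝ × ℝ, l₂ = (fun p => p + v) '' l₁) :=
  ⟨part1, part2⟩
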